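/- Fix a real number x and an integer k ≥ 2. Define the (k+1)×k real matrix J_k (rows indexed i = 0,…,k; columns indexed j = 0,…,k−1) by J_k[i][j] = (1/C(k,2))·A, where A = (1−x)·C(i,2) if j = i−2, A = x·C(i,2) + x·i·(k−i) if j = i−1, A = (1−x)·C(k−i,2) + (1−x)·i·(k−i) if j = i, A = x·C(k−i,2) if j = i+1, and A = 0 otherwise; here C(m,2) = m(m−1)/2. Then for every row i: if i is even, the sum of J_k[i][j] over even j equals 1−x and the sum over odd j equals x; if i is odd, the sum over even j equals x and the sum over odd j equals 1−x. -/

import Mathlib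

private lemma ind_sum (k m t : ℕ) (P : ℕ → Prop) [DecidablePred P] (v : ℝ) :
    ∑ j ∈ Finset.univ.filter (fun j : Fin k => P (j : ℕ)),
      (if (j : ℕ) + m = t then v else 0)
    = if m ≤ t ∧ t - m < k ∧ P (t - m) then v else 0 := by
  by_cases h : m ≤ t ∧ t - m < k ∧ P (t - m)
  · rw [if_pos h]
    obtain ⟨h1, h2, h3⟩ := h
    rw [Finset.sum_eq_single_of_mem (⟨t - m, h2⟩ : Fin k)]
    · simp [Nat.sub_add_cancel h1]
    · simp [h3]
    · intro b hb hne
      rw [if_neg]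
      intro hbt
      exact hne (Fin.ext (by simp; omega))
  · rw [if_neg h]
    apply Finset.sum_eq_zero
    intro j hj
    rw [Finset.mem_filter] at hj
    rw [if_neg]
    intro hjt
    exact h ⟨by omega, by omega, by
      have : t - m = (j : ℕ) := by omega
      rw [this]; exact hj.2⟩

private lemma ite_split (jn n : ℕ) (a b c d : ℝ) :
    (if jn + 2 = n then a
     else if jn + 1 = n then b
     else if jn = n then c
     else if jn = n + 1 then d
     else 0)
    = (if jn + 2 = n then a else 0) + (if jn + 1 = n then b else 0)
      + (if jn + 0 = n then c else 0) + (if jn + 0 = n + 1 then d else 0) := by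
  split_ifs <;> first
    | (exfalso; omega)
    | ring

/-- The transition block of the jump chain of the colored coalescent process from
colored states with `k` individuals (row index `i` = number of black individuals)
to colored states with `k - 1` individuals. -/
noncomputable def coalJ (x : ℝ) (k : ℕ) : Matrix (Fin (k + 1)) (Fin k) ℝ :=
  Matrix.of fun i j =>
    (1 / (k.choose 2 : ℝ)) *
      (if (j : ℕ) + 2 = (i : ℕ) then (1 - x) * ((i : ℕ).choose 2 : ℝ)
       else if (j : ℕ) + 1 = (i : ℕ) then
         x * ((i : ℕ).choose 2 : ℝ) + x * (i : ℕ) * ((k - (i : ℕ) : ℕ) : ℝ)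
       else if (j : ℕ) = (i : ℕ) then
         (1 - x) * (((k - (i : ℕ) : ℕ).choose 2 : ℝ)) +
           (1 - x) * (i : ℕ) * ((k - (i : ℕ) : ℕ) : ℝ)
       else if (j : ℕ) = (i : ℕ) + 1 then x * (((k - (i : ℕ) : ℕ).choose 2 : ℝ))
       else 0)

private lemma main_sum (x : ℝ) (k : ℕ) (i : Fin (k + 1)) (P : ℕ → Prop) [DecidablePred P] :
    ∑ j ∈ Finset.univ.filter (fun j : Fin k => P (j : ℕ)), coalJ x k i j
    = (1 / (k.choose 2 : ℝ)) *
      ((if 2 ≤ (i : ℕ) ∧ (i : ℕ) - 2 < k ∧ P ((i : ℕ) - 2) then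
          (1 - x) * ((i : ℕ).choose 2 : ℝ) else 0)
       + (if 1 ≤ (i : ℕ) ∧ (i : ℕ) - 1 < k ∧ P ((i : ℕ) - 1) then
          x * ((i : ℕ).choose 2 : ℝ) + x * (i : ℕ) * ((k - (i : ℕ) : ℕ) : ℝ) else 0)
       + (if (i : ℕ) < k ∧ P (i : ℕ) then
          (1 - x) * (((k - (i : ℕ) : ℕ).choose 2 : ℝ)) +
           (1 - x) * (i : ℕ) * ((k - (i : ℕ) : ℕ) : ℝ) else 0)
       + (if (i : ℕ) + 1 < k ∧ P ((i : ℕ) + 1) then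
          x * (((k - (i : ℕ) : ℕ).choose 2 : ℝ)) else 0)) := by
  simp only [coalJ, Matrix.of_apply]
  rw [← Finset.mul_sum]
  congr 1
  refine Eq.trans (Finset.sum_congr rfl fun j _ => ite_split (j : ℕ) (i : ℕ) _ _ _ _) ?_
  rw [Finset.sum_add_distrib, Finset.sum_add_distrib, Finset.sum_add_distrib,
    ind_sum, ind_sum, ind_sum, ind_sum]
  simp

theorem coalJ_parity_lumpable (x : ℝ) (k : ℕ) (hk : 2 ≤ k) (i : Fin (k + 1)) :
    (Even (i : ℕ) →
      ∑ j ∈ Finset.univ.filter (fun j : Fin k => Even (j : ℕ)), coalJ x k i j = 1 - x ∧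
      ∑ j ∈ Finset.univ.filter (fun j : Fin k => ¬ Even (j : ℕ)), coalJ x k i j = x) ∧
    (¬ Even (i : ℕ) →
      ∑ j ∈ Finset.univ.filter (fun j : Fin k => Even (j : ℕ)), coalJ x k i j = x ∧
      ∑ j ∈ Finset.univ.filter (fun j : Fin k => ¬ Even (j : ℕ)), coalJ x k i j = 1 - x) := by
  have hn : (i : ℕ) ≤ k := by omega
  have hC : (k.choose 2 : ℝ) ≠ 0 := by
    have : 0 < k.choose 2 := Nat.choose_pos hk
    positivity
  -- key combinatorial identity
  have key : ((i : ℕ).choose 2 : ℝ) + ((k - (i : ℕ)).choose 2 : ℝ)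
      + (i : ℕ) * ((k - (i : ℕ) : ℕ) : ℝ) = (k.choose 2 : ℝ) := by
    rw [Nat.cast_choose_two, Nat.cast_choose_two, Nat.cast_choose_two,
      Nat.cast_sub hn]
    ring
  -- vanishing facts at boundaries
  have z1 : (i : ℕ) < 2 → ((i : ℕ).choose 2 : ℝ) = 0 := fun h => by
    rw [Nat.choose_eq_zero_of_lt h]; simp
  have z2 : ¬ (i : ℕ) < k → ((k - (i : ℕ) : ℕ) : ℝ) = 0 ∧ ((k - (i : ℕ)).choose 2 : ℝ) = 0 := by
    intro h
    have : k - (i : ℕ) = 0 := by omega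
    simp [this]
  have z3 : ¬ (i : ℕ) + 1 < k → ((k - (i : ℕ)).choose 2 : ℝ) = 0 := by
    intro h
    have : k - (i : ℕ) < 2 := by omega
    rw [Nat.choose_eq_zero_of_lt this]; simp
  have comp1 : (1 / (k.choose 2 : ℝ)) *
      ((if 2 ≤ (i : ℕ) then (1 - x) * ((i : ℕ).choose 2 : ℝ) else 0)
        + (if (i : ℕ) < k then
            (1 - x) * (((k - (i : ℕ) : ℕ).choose 2 : ℝ)) +
              (1 - x) * (i : ℕ) * ((k - (i : ℕ) : ℕ) : ℝ) else 0)) = 1 - x := by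
    have e1 : (if 2 ≤ (i : ℕ) then (1 - x) * ((i : ℕ).choose 2 : ℝ) else 0)
        = (1 - x) * ((i : ℕ).choose 2 : ℝ) := by
      split_ifs with h
      · rfl
      · rw [z1 (by omega)]; ring
    have e2 : (if (i : ℕ) < k then
            (1 - x) * (((k - (i : ℕ) : ℕ).choose 2 : ℝ)) +
              (1 - x) * (i : ℕ) * ((k - (i : ℕ) : ℕ) : ℝ) else 0)
        = (1 - x) * (((k - (i : ℕ) : ℕ).choose 2 : ℝ)) +
              (1 - x) * (i : ℕ) * ((k - (i : ℕ) : ℕ) : ℝ) := by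
      split_ifs with h
      · rfl
      · obtain ⟨za, zb⟩ := z2 h
        rw [za, zb]; ring
    have kc : ((k - (i : ℕ) : ℕ) : ℝ) = (k : ℝ) - ((i : ℕ) : ℝ) := by
      exact Nat.cast_sub hn
    rw [e1, e2, kc]
    rw [kc] at key
    field_simp
    linear_combination (1 - x) * key
  have comp2 : (1 / (k.choose 2 : ℝ)) *
      ((if 1 ≤ (i : ℕ) then
          x * ((i : ℕ).choose 2 : ℝ) + x * (i : ℕ) * ((k - (i : ℕ) : ℕ) : ℝ) else 0)
        + (if (i : ℕ) + 1 < k then x * (((k - (i : ℕ) : ℕ).choose 2 : ℝ)) else 0)) = x := by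
    have e1 : (if 1 ≤ (i : ℕ) then
          x * ((i : ℕ).choose 2 : ℝ) + x * (i : ℕ) * ((k - (i : ℕ) : ℕ) : ℝ) else 0)
        = x * ((i : ℕ).choose 2 : ℝ) + x * (i : ℕ) * ((k - (i : ℕ) : ℕ) : ℝ) := by
      split_ifs with h
      · rfl
      · have h0 : (i : ℕ) = 0 := by omega
        rw [z1 (by omega), h0]; simp
    have e2 : (if (i : ℕ) + 1 < k then x * (((k - (i : ℕ) : ℕ).choose 2 : ℝ)) else 0)
        = x * (((k - (i : ℕ) : ℕ).choose 2 : ℝ)) := by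
      split_ifs with h
      · rfl
      · rw [z3 h]; ring
    have kc : ((k - (i : ℕ) : ℕ) : ℝ) = (k : ℝ) - ((i : ℕ) : ℝ) := by
      exact Nat.cast_sub hn
    rw [e1, e2, kc]
    rw [kc] at key
    field_simp
    linear_combination x * key
  rw [Nat.even_iff] at *
  constructor
  · intro hi
    constructor
    · rw [main_sum x k i (fun n => Even n)]
      have c1 : (2 ≤ (i : ℕ) ∧ (i : ℕ) - 2 < k ∧ Even ((i : ℕ) - 2)) ↔ 2 ≤ (i : ℕ) := by
        rw [Nat.even_iff]; omega
      have c2 : ¬ (1 ≤ (i : ℕ) ∧ (i : ℕ) - 1 < k ∧ Even ((i : ℕ) - 1)) := by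
        rw [Nat.even_iff]; omega
      have c3 : ((i : ℕ) < k ∧ Even (i : ℕ)) ↔ (i : ℕ) < k := by
        rw [Nat.even_iff]; omega
      have c4 : ¬ ((i : ℕ) + 1 < k ∧ Even ((i : ℕ) + 1)) := by
        rw [Nat.even_iff]; omega
      rw [if_neg c2, if_neg c4]
      simp only [c1, c3, add_zero]
      exact comp1
    · rw [main_sum x k i (fun n => ¬ Even n)]
      have c1 : ¬ (2 ≤ (i : ℕ) ∧ (i : ℕ) - 2 < k ∧ ¬ Even ((i : ℕ) - 2)) := by
        rw [Nat.even_iff]; omega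
      have c2 : (1 ≤ (i : ℕ) ∧ (i : ℕ) - 1 < k ∧ ¬ Even ((i : ℕ) - 1)) ↔ 1 ≤ (i : ℕ) := by
        rw [Nat.even_iff]; omega
      have c3 : ¬ ((i : ℕ) < k ∧ ¬ Even (i : ℕ)) := by
        rw [Nat.even_iff]; omega
      have c4 : ((i : ℕ) + 1 < k ∧ ¬ Even ((i : ℕ) + 1)) ↔ (i : ℕ) + 1 < k := by
        rw [Nat.even_iff]; omega
      rw [if_neg c1, if_neg c3]
      simp only [c2, c4, add_zero, zero_add]
      exact comp2
  · intro hi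
    constructor
    · rw [main_sum x k i (fun n => Even n)]
      have c1 : ¬ (2 ≤ (i : ℕ) ∧ (i : ℕ) - 2 < k ∧ Even ((i : ℕ) - 2)) := by
        rw [Nat.even_iff]; omega
      have c2 : (1 ≤ (i : ℕ) ∧ (i : ℕ) - 1 < k ∧ Even ((i : ℕ) - 1)) ↔ 1 ≤ (i : ℕ) := by
        rw [Nat.even_iff]; omega
      have c3 : ¬ ((i : ℕ) < k ∧ Even (i : ℕ)) := by
        rw [Nat.even_iff]; omega
      have c4 : ((i : ℕ) + 1 < k ∧ Even ((i : ℕ) + 1)) ↔ (i : ℕ) + 1 < k := by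
        rw [Nat.even_iff]; omega
      rw [if_neg c1, if_neg c3]
      simp only [c2, c4, add_zero, zero_add]
      exact comp2
    · rw [main_sum x k i (fun n => ¬ Even n)]
      have c1 : (2 ≤ (i : ℕ) ∧ (i : ℕ) - 2 < k ∧ ¬ Even ((i : ℕ) - 2)) ↔ 2 ≤ (i : ℕ) := by
        rw [Nat.even_iff]; omega
      have c2 : ¬ (1 ≤ (i : ℕ) ∧ (i : ℕ) - 1 < k ∧ ¬ Even ((i : ℕ) - 1)) := by
        rw [Nat.even_iff]; omega
      have c3 : ((i : ℕ) < k ∧ ¬ Even (i : ℕ)) ↔ (i : ℕ) < k := by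
        rw [Nat.even_iff]; omega
      have c4 : ¬ ((i : ℕ) + 1 < k ∧ ¬ Even ((i : ℕ) + 1)) := by
        rw [Nat.even_iff]; omega
      rw [if_neg c2, if_neg c4]
      simp only [c1, c3, add_zero]
      exact comp1
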